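/- Let M = [[A, B], [C, D]] be a real block matrix with A invertible and the Schur complement D − C·A⁻¹·B invertible. Then M is invertible and M⁻¹ = [[A⁻¹, 0], [0, 0]] + col(−A⁻¹B; I) · (D − C·A⁻¹·B)⁻¹ · row(−(A⁻¹B)ᵀ, I) · (I − M·[[A⁻¹, 0], [0, 0]]), where col(−A⁻¹B; I) denotes the (n₁+n₂)×n₂ matrix with top block −A⁻¹B and bottom block the n₂×n₂ identity, and row(−(A⁻¹B)ᵀ, I) denotes the n₂×(n₁+n₂) matrix with left block −(A⁻¹B)ᵀ and right block the n₂×n₂ identity. -/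

import Mathlib

open Matrix

/-- **Block matrix inversion formula.**
Let `M = [[A, B], [C, D]]` be a real block matrix with `A` invertible and the Schur
complement `D - C·A⁻¹·B` invertible.  Then `M` is invertible and
`M⁻¹ = [[A⁻¹,0],[0,0]] + col(-A⁻¹B; I) · (D - C·A⁻¹·B)⁻¹ · row(-(A⁻¹B)ᵀ, I) · (I - M·[[A⁻¹,0],[0,0]])`. -/
theorem block_inverse_formula {n₁ n₂ : ℕ}
    (A : Matrix (Fin n₁) (Fin n₁) ℝ) (B : Matrix (Fin n₁) (Fin n₂) ℝ)
    (C : Matrix (Fin n₂) (Fin n₁) ℝ) (D : Matrix (Fin n₂) (Fin n₂) ℝ)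
    (hA : IsUnit A) (hS : IsUnit (D - C * A⁻¹ * B)) :
    IsUnit (Matrix.fromBlocks A B C D) ∧
    (Matrix.fromBlocks A B C D)⁻¹ =
      Matrix.fromBlocks A⁻¹ 0 0 0 +
      Matrix.fromRows (-(A⁻¹ * B)) (1 : Matrix (Fin n₂) (Fin n₂) ℝ) *
        (D - C * A⁻¹ * B)⁻¹ *
        Matrix.fromCols (-((A⁻¹ * B)ᵀ)) (1 : Matrix (Fin n₂) (Fin n₂) ℝ) *
        ((1 : Matrix (Fin n₁ ⊕ Fin n₂) (Fin n₁ ⊕ Fin n₂) ℝ) -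
          Matrix.fromBlocks A B C D * Matrix.fromBlocks A⁻¹ 0 0 0) := by
  obtain ⟨iA⟩ := hA.nonempty_invertible
  obtain ⟨iS⟩ := hS.nonempty_invertible
  have hiA : ⅟A = A⁻¹ := invOf_eq_nonsing_inv A
  have hiS : ⅟(D - C * A⁻¹ * B) = (D - C * A⁻¹ * B)⁻¹ := invOf_eq_nonsing_inv _
  haveI : Invertible (D - C * ⅟A * B) := by rw [hiA]; exact iS
  haveI := fromBlocks₁₁Invertible A B C D
  have hMinv : (fromBlocks A B C D)⁻¹ =
      fromBlocks (A⁻¹ + A⁻¹ * B * (D - C * A⁻¹ * B)⁻¹ * C * A⁻¹)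
        (-(A⁻¹ * B * (D - C * A⁻¹ * B)⁻¹))
        (-((D - C * A⁻¹ * B)⁻¹ * C * A⁻¹)) ((D - C * A⁻¹ * B)⁻¹) := by
    rw [← invOf_eq_nonsing_inv, invOf_fromBlocks₁₁_eq]
    simp_rw [hiA]
    rw [show ⅟(D - C * A⁻¹ * B) = (D - C * A⁻¹ * B)⁻¹ from invOf_eq_nonsing_inv _]
  have hAA : A * A⁻¹ = 1 := mul_nonsing_inv A ((isUnit_iff_isUnit_det A).mp hA)
  refine ⟨isUnit_of_invertible _, ?_⟩
  rw [hMinv]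
  rw [fromBlocks_multiply, hAA]
  simp only [Matrix.mul_zero, Matrix.zero_mul, add_zero, zero_add]
  rw [show (1 : Matrix (Fin n₁ ⊕ Fin n₂) (Fin n₁ ⊕ Fin n₂) ℝ) = fromBlocks 1 0 0 1 from
    (fromBlocks_one).symm]
  rw [show fromBlocks (1 : Matrix (Fin n₁) (Fin n₁) ℝ) 0 0 1 - fromBlocks 1 0 (C * A⁻¹) 0 =
    fromBlocks 0 0 (-(C * A⁻¹)) 1 by
      ext i j; cases i <;> cases j <;> simp [fromBlocks]]
  rw [fromRows_mul, fromRows_mul_fromCols, fromBlocks_multiply, fromBlocks_add]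
  simp only [Matrix.mul_zero, Matrix.zero_mul, Matrix.mul_one, Matrix.one_mul, add_zero, zero_add,
    Matrix.mul_neg, Matrix.neg_mul, neg_neg]
  simp only [Matrix.mul_assoc]
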